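/- For all ordinals α below ε₀ (in Cantor normal form) with α ≠ 0 and all x ∈ ℕ, the length hierarchy satisfies h_α(x) = 1 + h_{P_x(α)}(h(x)), where P_x is the x-indexed predecessor and h is any fixed control function. -/

import Mathlib

/-- Ordinal terms below ε₀: a term is a list of exponents,
`cons β γ` denoting ω^β + γ. -/
inductive OT : Type
  | nil : OT
  | cons : OT → OT → OT
deriving DecidableEq

namespace OT

/-- The term 1 = ω^0. -/
def one : OT := cons nil nil

/-- Syntactic concatenation (direct sum) of ordinal terms. -/
def add : OT → OT → OT
  | nil, b => b
  | cons e r, b => cons e (add r b)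

/-- A term ω^{β₁}+...+ω^{β_m} is a successor iff m > 0 and β_m = 0. -/
def isSucc : OT → Bool
  | nil => false
  | cons e nil => e == nil
  | cons _ (cons e r) => isSucc (cons e r)

/-- Remove the last summand ω^0 of a successor term. -/
def pred : OT → OT
  | nil => nil
  | cons _ nil => nil
  | cons e (cons e' r) => cons e (pred (cons e' r))

/-- Limit terms. -/
def isLim (a : OT) : Prop := a ≠ nil ∧ isSucc a = false

/-- ω^β · n as an ordinal term. -/
def rep : ℕ → OT → OT
  | 0, _ => nil
  | n + 1, β => cons β (rep n β)

/-- The standard assignment of fundamental sequences (with ω_x = x+1):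
(γ+ω^{β+1})_x = γ+ω^β·(x+1) and (γ+ω^λ)_x = γ+ω^{λ_x}. -/
def fseq : OT → ℕ → OT
  | nil, _ => nil
  | cons β nil, x =>
      if β = nil then nil
      else if isSucc β then rep (x + 1) (pred β)
      else cons (fseq β x) nil
  | cons β (cons e r), x => cons β (fseq (cons e r) x)

/-- Syntactic ordering of terms (on CNF terms this is the ordinal ordering). -/
def lt : OT → OT → Prop
  | _, nil => False
  | nil, cons _ _ => True
  | cons a r, cons b s => lt a b ∨ (a = b ∧ lt r s)

def le (a b : OT) : Prop := lt a b ∨ a = b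

/-- Cantor normal form: exponents weakly decreasing, all in CNF. -/
def isCNF : OT → Prop
  | nil => True
  | cons b nil => isCNF b
  | cons b (cons e r) => isCNF b ∧ le e b ∧ isCNF (cons e r)

/-- Number of occurrences of the exponent β in a term. -/
def count (β : OT) : OT → ℕ
  | nil => 0
  | cons b r => (if b = β then 1 else 0) + count β r

/-- k-lean: every coefficient (at every level) is ≤ k. -/
def leanOrd (k : ℕ) : OT → Prop
  | nil => True
  | cons b r => count b (cons b r) ≤ k ∧ leanOrd k b ∧ leanOrd k r

end OT

/-- Pointwise-at-x ordering: smallest transitive relation with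
α ⊏_x α+1 and λ_x ⊏_x λ. -/
inductive Ptw (x : ℕ) : OT → OT → Prop
  | succ (a : OT) : Ptw x a (OT.add a OT.one)
  | lim (l : OT) : OT.isLim l → Ptw x (OT.fseq l x) l
  | trans {a b c : OT} : Ptw x a b → Ptw x b c → Ptw x a c

/-- Ordinal value of a term. -/
noncomputable def otval : OT → Ordinal.{0}
  | .nil => 0
  | .cons b r => Ordinal.omega0 ^ otval b + otval r

lemma otval_pred : ∀ a : OT, OT.isSucc a = true → otval a = otval (OT.pred a) + 1
  | .nil, h => by simp [OT.isSucc] at h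
  | .cons b .nil, h => by
      have hb : b = OT.nil := by simpa [OT.isSucc] using h
      subst hb
      simp [otval, OT.pred]
  | .cons b (.cons e r), h => by
      have ht : OT.isSucc (.cons e r) = true := by simpa [OT.isSucc] using h
      calc otval (OT.cons b (OT.cons e r))
          = Ordinal.omega0 ^ otval b + otval (OT.cons e r) := rfl
        _ = Ordinal.omega0 ^ otval b + (otval (OT.pred (OT.cons e r)) + 1) := by
              rw [otval_pred _ ht]
        _ = (Ordinal.omega0 ^ otval b + otval (OT.pred (OT.cons e r))) + 1 :=
              (add_assoc _ _ _).symm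
        _ = otval (OT.pred (OT.cons b (OT.cons e r))) + 1 := rfl

lemma otval_rep (β : OT) : ∀ n, otval (OT.rep n β) = Ordinal.omega0 ^ otval β * n
  | 0 => by simp [OT.rep, otval]
  | n + 1 => by
      have := otval_rep β n
      simp only [OT.rep, otval, this]
      rw [show (n + 1 : ℕ) = 1 + n by omega]
      push_cast
      rw [mul_add, mul_one]

lemma fseq_lt (x : ℕ) : ∀ a : OT, OT.isLim a → otval (OT.fseq a x) < otval a := by
  intro a
  induction a with
  | nil => intro hl; exact absurd rfl hl.1
  | cons b r ihb ihr =>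
    intro hl
    cases r with
    | nil =>
      have hb : b ≠ OT.nil := by
        intro hbn; subst hbn
        simp [OT.isLim, OT.isSucc] at hl
      by_cases hsb : OT.isSucc b = true
      · have heq : OT.fseq (OT.cons b OT.nil) x = OT.rep (x + 1) (OT.pred b) := by
          simp [OT.fseq, hb, hsb]
        rw [heq, otval_rep]
        have hv := otval_pred b hsb
        simp only [otval, add_zero]
        rw [hv, Ordinal.add_one_eq_succ, Ordinal.opow_succ]
        exact mul_lt_mul_of_pos_left (Ordinal.nat_lt_omega0 (x + 1))
          (Ordinal.opow_pos _ Ordinal.omega0_pos)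
      · have heq : OT.fseq (OT.cons b OT.nil) x = OT.cons (OT.fseq b x) OT.nil := by
          simp [OT.fseq, hb, hsb]
        rw [heq]
        simp only [otval, add_zero]
        have hblim : OT.isLim b := ⟨hb, by simpa using hsb⟩
        exact (Ordinal.opow_lt_opow_iff_right Ordinal.one_lt_omega0).2 (ihb hblim)
    | cons e r' =>
      have htl : OT.isLim (OT.cons e r') :=
        ⟨by simp, by simpa [OT.isSucc] using hl.2⟩
      show otval (OT.cons b (OT.fseq (OT.cons e r') x)) < _
      simp only [otval]
      exact (add_lt_add_iff_left _).2 (ihr htl)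

lemma fseq_ne_nil (x : ℕ) (a : OT) (hl : OT.isLim a) : OT.fseq a x ≠ OT.nil := by
  cases a with
  | nil => exact absurd rfl hl.1
  | cons b r =>
    cases r with
    | nil =>
      have hb : b ≠ OT.nil := by
        intro hbn; subst hbn
        simp [OT.isLim, OT.isSucc] at hl
      by_cases hsb : OT.isSucc b = true <;> simp [OT.fseq, hb, hsb, OT.rep]
    | cons e r' => simp [OT.fseq]

/-- For every α ≠ 0 below ε₀ and x : h_α(x) = 1 + h_{P_x(α)}(h(x)), where
`L` is the length hierarchy built from the control `h` and `P` the
x-indexed predecessor (both characterized by their defining equations). -/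
theorem stmt11 (h : ℕ → ℕ) (L : OT → ℕ → ℕ) (P : ℕ → OT → OT)
    (hL0 : ∀ x, L OT.nil x = 0)
    (hLs : ∀ a x, OT.isSucc a = true → L a x = 1 + L (OT.pred a) (h x))
    (hLl : ∀ a x, OT.isLim a → L a x = L (OT.fseq a x) x)
    (hPs : ∀ x a, OT.isSucc a = true → P x a = OT.pred a)
    (hPl : ∀ x a, OT.isLim a → P x a = P x (OT.fseq a x)) :
    ∀ (a : OT) (x : ℕ), a ≠ OT.nil → L a x = 1 + L (P x a) (h x) := by
  have main : ∀ o : Ordinal.{0}, ∀ (a : OT) (x : ℕ), otval a = o → a ≠ OT.nil →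
      L a x = 1 + L (P x a) (h x) := by
    intro o
    induction o using Ordinal.induction with
    | h o IH =>
      intro a x ho ha
      subst ho
      by_cases hs : OT.isSucc a = true
      · rw [hLs a x hs, hPs x a hs]
      · have hlim : OT.isLim a := ⟨ha, by simpa using hs⟩
        rw [hLl a x hlim, hPl x a hlim]
        exact IH _ (fseq_lt x a hlim) _ x rfl (fseq_ne_nil x a hlim)
  intro a x ha
  exact main (otval a) a x rfl ha
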